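/- For every natural number n ≥ 1, the squarefree part of n² + 2 is not equal to the squarefree part of n² + 4; equivalently, (n² + 2)(n² + 4) is not a perfect square times a square of a rational, so ℚ(√(n²+2)) ≠ ℚ(√(n²+4)). -/
import Mathlib


/-- The squarefree parts of `n² + 2` and `n² + 4` differ: there is no squarefree
natural number `s` such that both `n² + 2` and `n² + 4` equal `s` times a perfect
square. -/
theorem stmt_0 (n : ℕ) (hn : 1 ≤ n) :
    ¬ ∃ s k₁ k₂ : ℕ, Squarefree s ∧ n ^ 2 + 2 = s * k₁ ^ 2 ∧ n ^ 2 + 4 = s * k₂ ^ 2 := by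
  rintro ⟨s, k₁, k₂, hs, h1, h2⟩
  have hs1 : 1 ≤ s := Nat.one_le_iff_ne_zero.mpr hs.ne_zero
  have hk1 : 1 ≤ k₁ := by
    rcases Nat.eq_zero_or_pos k₁ with h | h
    · simp [h] at h1
    · exact h
  have hlt : k₁ < k₂ := by
    by_contra h
    push_neg at h
    have := Nat.mul_le_mul_left s (Nat.pow_le_pow_left h 2)
    omega
  have hk2 : k₁ + 1 ≤ k₂ := hlt
  nlinarith [mul_le_mul_of_nonneg_left (Nat.pow_le_pow_left hk2 2) (Nat.zero_le s)]
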